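/- Let R be a 2-torsion free σ-prime ring, U a square closed σ-Lie ideal of R with U ⊄ Z(R), and d a derivation of R. If [d(x), x] ∈ Z(R) for all x ∈ U, then [d(x), x] = 0 for all x ∈ U. -/
import Mathlib


theorem stmt16 (R : Type*) [Ring R]
  (σ : R → R)
  (hσadd : ∀ x y : R, σ (x + y) = σ x + σ y)
  (hσmul : ∀ x y : R, σ (x * y) = σ y * σ x)
  (hσinv : ∀ x : R, σ (σ x) = x)
  (htor : ∀ x : R, x + x = 0 → x = 0)
  (hsp : ∀ a b : R, (∀ r : R, a * r * b = 0) → (∀ r : R, a * r * σ b = 0) → a = 0 ∨ b = 0)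
  (U : AddSubgroup R)
  (hLie : ∀ u ∈ U, ∀ r : R, u * r - r * u ∈ U)
  (hσU : ∀ u ∈ U, σ u ∈ U)
  (hsq : ∀ u ∈ U, u * u ∈ U)
  (hUnc : ¬ (∀ u ∈ U, ∀ r : R, u * r = r * u))
  (d : R → R)
  (hdadd : ∀ x y : R, d (x + y) = d x + d y)
  (hdmul : ∀ x y : R, d (x * y) = d x * y + x * d y)
  (hcent : ∀ u ∈ U, ∀ r : R, (d u * u - u * d u) * r = r * (d u * u - u * d u)) :
    ∀ u ∈ U, d u * u - u * d u = 0 := by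
  intro u hu
  set c : R := d u * u - u * d u with hc_def
  have hc : ∀ r : R, c * r = r * c := hcent u hu
  have hu2 : u * u ∈ U := hsq u hu
  have hu3 : u + u * u ∈ U := U.add_mem hu hu2
  have h2 := hcent _ hu2
  have h3 := hcent _ hu3
  have hd3 : d (u + u * u) = d u + (d u * u + u * d u) := by rw [hdadd, hdmul]
  have hd2 : d (u * u) = d u * u + u * d u := hdmul u u
  set w : R := d u * (u * u) - (u * u) * d u with hw_def
  set c2 : R := d (u * u) * (u * u) - (u * u) * d (u * u) with hc2_def
  -- the linearized expression decomposes
  have hdecomp : d (u + u * u) * (u + u * u) - (u + u * u) * d (u + u * u)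
      = c + c2 + (w + w) := by
    rw [hc2_def, hd3, hd2, hc_def, hw_def]; noncomm_ring
  -- w + w is central, hence w is central
  have hww : ∀ r : R, (w + w) * r = r * (w + w) := by
    intro r
    have e1 := h3 r
    rw [hdecomp] at e1
    have l1 : (c + c2 + (w + w)) * r = c * r + c2 * r + (w + w) * r := by noncomm_ring
    have l2 : r * (c + c2 + (w + w)) = r * c + r * c2 + r * (w + w) := by noncomm_ring
    rw [l1, l2, hc r, h2 r] at e1
    exact add_left_cancel e1
  have hw : ∀ r : R, w * r = r * w := by
    intro r
    have e := hww r
    have : (w * r - r * w) + (w * r - r * w) = 0 := by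
      have : (w + w) * r - r * (w + w) = 0 := sub_eq_zero_of_eq e
      calc (w * r - r * w) + (w * r - r * w) = (w + w) * r - r * (w + w) := by noncomm_ring
        _ = 0 := this
    exact sub_eq_zero.mp (htor _ this)
  -- w = c*u + u*c = c*u + c*u
  have hwcu : w = c * u + c * u := by
    have huc : u * c = c * u := (hc u).symm
    rw [hw_def, hc_def]
    have : d u * (u * u) - u * u * d u = (d u * u - u * d u) * u + u * (d u * u - u * d u) := by
      noncomm_ring
    rw [this, ← hc_def, huc]
  -- c*u is central
  have hcu : ∀ r : R, (c * u) * r = r * (c * u) := by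
    intro r
    have e := hw r
    rw [hwcu] at e
    have : ((c * u) * r - r * (c * u)) + ((c * u) * r - r * (c * u)) = 0 := by
      have h0 : (c * u + c * u) * r - r * (c * u + c * u) = 0 := sub_eq_zero_of_eq e
      calc ((c * u) * r - r * (c * u)) + ((c * u) * r - r * (c * u))
          = (c * u + c * u) * r - r * (c * u + c * u) := by noncomm_ring
        _ = 0 := h0
    exact sub_eq_zero.mp (htor _ this)
  -- c * [u, r] = 0 for all r
  have hcomm : ∀ r : R, c * (u * r - r * u) = 0 := by
    intro r
    have e1 : c * (u * r) = (c * u) * r := by rw [mul_assoc]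
    have e2 : (c * u) * r = r * (c * u) := hcu r
    have e3 : r * (c * u) = (r * c) * u := by rw [mul_assoc]
    have e4 : (r * c) * u = (c * r) * u := by rw [← hc r]
    have e5 : (c * r) * u = c * (r * u) := by rw [mul_assoc]
    have : c * (u * r) = c * (r * u) := by rw [e1, e2, e3, e4, e5]
    rw [mul_sub, this, sub_self]
  -- c^2 = 0
  have hc2zero : c * c = 0 := by
    have := hcomm (d u)
    have hneg : u * d u - d u * u = -c := by rw [hc_def]; noncomm_ring
    rw [hneg, mul_neg, neg_eq_zero] at this
    exact this
  -- σ c is central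
  have hσc : ∀ r : R, σ c * r = r * σ c := by
    intro r
    calc σ c * r = σ c * σ (σ r) := by rw [hσinv]
      _ = σ (σ r * c) := (hσmul _ _).symm
      _ = σ (c * σ r) := by rw [← hc (σ r)]
      _ = σ (σ r) * σ c := hσmul _ _
      _ = r * σ c := by rw [hσinv]
  -- t := c * σ c is σ-invariant, central, square-zero
  set t : R := c * σ c with ht_def
  have hσt : σ t = t := by rw [ht_def, hσmul, hσinv]
  have htc : ∀ r : R, t * r = r * t := by
    intro r
    rw [ht_def, mul_assoc, hσc r, ← mul_assoc, hc r, mul_assoc]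
  have ht2 : t * t = 0 := by
    rw [ht_def]
    calc c * σ c * (c * σ c) = c * (σ c * c) * σ c := by noncomm_ring
      _ = c * (c * σ c) * σ c := by rw [hσc c]
      _ = (c * c) * (σ c * σ c) := by noncomm_ring
      _ = 0 := by rw [hc2zero, zero_mul]
  have ht0 : t = 0 := by
    have h1 : ∀ r : R, t * r * t = 0 := by
      intro r; rw [htc r, mul_assoc, ht2, mul_zero]
    have h2 : ∀ r : R, t * r * σ t = 0 := by
      intro r; rw [hσt]; exact h1 r
    rcases hsp t t h1 h2 with h | h <;> exact h
  -- finally c = 0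
  have h1 : ∀ r : R, c * r * c = 0 := by
    intro r; rw [hc r, mul_assoc, hc2zero, mul_zero]
  have h2 : ∀ r : R, c * r * σ c = 0 := by
    intro r; rw [hc r, mul_assoc, ← ht_def, ht0, mul_zero]
  rcases hsp c c h1 h2 with h | h <;> exact h
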